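/- Let G be a chordal finite simple graph, let r be a vertex of G, and let i ≥ 1 be a natural number. If x and y are adjacent vertices with dist_G(r,x) = dist_G(r,y) = i, then either every neighbor of x at distance i−1 from r is also a neighbor of y, or every neighbor of y at distance i−1 from r is also a neighbor of x. -/
import Mathlib


open SimpleGraph

variable {V : Type*}

/-- A generic search (GS) ordering: every vertex other than the first has an
earlier neighbor. -/
def IsGSOrdering [Fintype V] (G : SimpleGraph V) (σ : Fin (Fintype.card V) ≃ V) : Prop :=
  ∀ w : V, (σ.symm w).val ≠ 0 → ∃ u : V, σ.symm u < σ.symm w ∧ G.Adj u w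

/-- DFS ordering (Corneil–Krueger four-point characterization). -/
def IsDFSOrdering [Fintype V] (G : SimpleGraph V) (σ : Fin (Fintype.card V) ≃ V) : Prop :=
  IsGSOrdering G σ ∧ ∀ a b c : V, σ.symm a < σ.symm b → σ.symm b < σ.symm c →
    G.Adj a c → ¬ G.Adj a b →
      ∃ d : V, σ.symm a < σ.symm d ∧ σ.symm d < σ.symm b ∧ G.Adj d b

/-- BFS ordering (Corneil–Krueger four-point characterization). -/
def IsBFSOrdering [Fintype V] (G : SimpleGraph V) (σ : Fin (Fintype.card V) ≃ V) : Prop :=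
  IsGSOrdering G σ ∧ ∀ a b c : V, σ.symm a < σ.symm b → σ.symm b < σ.symm c →
    G.Adj a c → ¬ G.Adj a b →
      ∃ d : V, σ.symm d < σ.symm a ∧ G.Adj d b

/-- LDFS ordering (Corneil–Krueger four-point characterization). -/
def IsLDFSOrdering [Fintype V] (G : SimpleGraph V) (σ : Fin (Fintype.card V) ≃ V) : Prop :=
  IsGSOrdering G σ ∧ ∀ a b c : V, σ.symm a < σ.symm b → σ.symm b < σ.symm c →
    G.Adj a c → ¬ G.Adj a b →
      ∃ d : V, σ.symm a < σ.symm d ∧ σ.symm d < σ.symm b ∧ G.Adj d b ∧ ¬ G.Adj d c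

/-- MNS ordering (Corneil–Krueger four-point characterization). -/
def IsMNSOrdering [Fintype V] (G : SimpleGraph V) (σ : Fin (Fintype.card V) ≃ V) : Prop :=
  IsGSOrdering G σ ∧ ∀ a b c : V, σ.symm a < σ.symm b → σ.symm b < σ.symm c →
    G.Adj a c → ¬ G.Adj a b →
      ∃ d : V, σ.symm d < σ.symm b ∧ G.Adj d b ∧ ¬ G.Adj d c

/-- MCS ordering: for positions `i < j`, the vertex at position `i` has at least as many
neighbors among the vertices at positions `< i` as the vertex at position `j` has. -/
def IsMCSOrdering [Fintype V] (G : SimpleGraph V) (σ : Fin (Fintype.card V) ≃ V) : Prop :=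
  ∀ i j : Fin (Fintype.card V), i < j →
    Nat.card {k : Fin (Fintype.card V) // k < i ∧ G.Adj (σ k) (σ j)} ≤
    Nat.card {k : Fin (Fintype.card V) // k < i ∧ G.Adj (σ k) (σ i)}

/-- A perfect elimination ordering: the earlier neighbors of any vertex form a clique. -/
def IsPEO [Fintype V] (G : SimpleGraph V) (σ : Fin (Fintype.card V) ≃ V) : Prop :=
  ∀ u v w : V, σ.symm u < σ.symm w → σ.symm v < σ.symm w → u ≠ v →
    G.Adj u w → G.Adj v w → G.Adj u v

/-- `u` is the F-parent of `v`: `v` is not the first vertex and `u` is the earliest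
neighbor of `v` in the ordering. -/
def FParent [Fintype V] (G : SimpleGraph V) (σ : Fin (Fintype.card V) ≃ V) (u v : V) : Prop :=
  (σ.symm v).val ≠ 0 ∧ G.Adj u v ∧ ∀ w : V, G.Adj w v → σ.symm u ≤ σ.symm w

/-- `u` is the L-parent of `v`: `v` is not the first vertex and `u` is the last
neighbor of `v` occurring before `v` in the ordering. -/
def LParent [Fintype V] (G : SimpleGraph V) (σ : Fin (Fintype.card V) ≃ V) (u v : V) : Prop :=
  (σ.symm v).val ≠ 0 ∧ G.Adj u v ∧ σ.symm u < σ.symm v ∧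
    ∀ w : V, G.Adj w v → σ.symm w < σ.symm v → σ.symm w ≤ σ.symm u

/-- `v` is an F-branch leaf: `v` is not the first vertex and is the F-parent of no vertex. -/
def FBranchLeaf [Fintype V] (G : SimpleGraph V) (σ : Fin (Fintype.card V) ≃ V) (v : V) : Prop :=
  (σ.symm v).val ≠ 0 ∧ ∀ w : V, ¬ FParent G σ v w

/-- `v` is the F-root leaf: `v` is the first vertex and is the F-parent of exactly one vertex. -/
def FRootLeaf [Fintype V] (G : SimpleGraph V) (σ : Fin (Fintype.card V) ≃ V) (v : V) : Prop :=
  (σ.symm v).val = 0 ∧ ∃! w : V, FParent G σ v w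

/-- `v` is an L-branch leaf: `v` is not the first vertex and is the L-parent of no vertex. -/
def LBranchLeaf [Fintype V] (G : SimpleGraph V) (σ : Fin (Fintype.card V) ≃ V) (v : V) : Prop :=
  (σ.symm v).val ≠ 0 ∧ ∀ w : V, ¬ LParent G σ v w

/-- `v` is the L-root leaf: `v` is the first vertex and is the L-parent of exactly one vertex. -/
def LRootLeaf [Fintype V] (G : SimpleGraph V) (σ : Fin (Fintype.card V) ≃ V) (v : V) : Prop :=
  (σ.symm v).val = 0 ∧ ∃! w : V, LParent G σ v w

/-- `v` is an L-leaf: the L-root leaf or an L-branch leaf. -/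
def LLeaf [Fintype V] (G : SimpleGraph V) (σ : Fin (Fintype.card V) ≃ V) (v : V) : Prop :=
  LRootLeaf G σ v ∨ LBranchLeaf G σ v

/-- `v` is the end-vertex (last vertex) of the ordering `σ`. -/
def IsEndVertex [Fintype V] (σ : Fin (Fintype.card V) ≃ V) (v : V) : Prop :=
  (σ.symm v).val = Fintype.card V - 1

/-- `v` is a cut vertex: deleting `v` yields a disconnected graph. -/
def CutVertex (G : SimpleGraph V) (v : V) : Prop :=
  ¬ (G.induce {w : V | w ≠ v}).Connected

/-- A graph is chordal if every cycle of length at least 4 has a chord, i.e. an edge of the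
graph joining two vertices of the cycle which is not an edge of the cycle. -/
def IsChordal (G : SimpleGraph V) : Prop :=
  ∀ ⦃v : V⦄ (w : G.Walk v v), w.IsCycle → 4 ≤ w.length →
    ∃ x y : V, x ∈ w.support ∧ y ∈ w.support ∧ G.Adj x y ∧ s(x, y) ∉ w.edges

private lemma edge_mem_of_length_eq_one {G : SimpleGraph V} {u v : V} (w : G.Walk u v)
    (h : w.length = 1) : s(u, v) ∈ w.edges := by
  match w with
  | .nil => simp at h
  | .cons h' .nil => simp
  | .cons h' (.cons h'' w') => simp [Walk.length_cons] at h

/-- In a chordal graph, if `x` and `y` are adjacent vertices at distance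
`i ≥ 1` from `r`, then the neighbors of `x` at distance `i - 1` from `r` are all
neighbors of `y`, or vice versa. -/
theorem stmt16 [Fintype V] (G : SimpleGraph V) (hch : IsChordal G)
    (r x y : V) (i : ℕ) (hi : 1 ≤ i)
    (hrx : G.Reachable r x) (hry : G.Reachable r y)
    (hdx : G.dist r x = i) (hdy : G.dist r y = i) (hxy : G.Adj x y) :
    (∀ w : V, G.Adj x w → G.dist r w = i - 1 → G.Adj y w) ∨
    (∀ w : V, G.Adj y w → G.dist r w = i - 1 → G.Adj x w) := by
  classical
  by_contra hcon
  push_neg at hcon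
  obtain ⟨⟨w, hxw, hdw, hyw⟩, ⟨z, hyz, hdz, hxz⟩⟩ := hcon
  have hrw : G.Reachable r w := hrx.trans hxw.reachable
  have hrz : G.Reachable r z := hry.trans hyz.reachable
  have hi2 : 2 ≤ i := by
    rcases Nat.lt_or_ge i 2 with h | h
    · have hw0 : r = w := hrw.dist_eq_zero_iff.mp (by omega)
      have hz0 : r = z := hrz.dist_eq_zero_iff.mp (by omega)
      have hwz' : w = z := hw0.symm.trans hz0
      exact absurd (hwz' ▸ hxw) hxz
    · exact h
  have hwz : w ≠ z := fun h => hxz (h ▸ hxw)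
  have hxnw : x ≠ w := fun h => by rw [h] at hdx; omega
  have hxnz : x ≠ z := fun h => by rw [h] at hdx; omega
  have hynw : y ≠ w := fun h => by rw [h] at hdy; omega
  have hynz : y ≠ z := fun h => by rw [h] at hdy; omega
  have hxny : x ≠ y := hxy.ne
  have key : ∀ (s : V) (pp : G.Walk r s), pp.length = i - 1 →
      ∀ u ∈ pp.support, u ≠ s → G.Reachable r u ∧ G.dist r u ≤ i - 2 := by
    intro s pp hlen u hu hus
    refine ⟨⟨pp.takeUntil u hu⟩, ?_⟩
    have h1 := SimpleGraph.dist_le (pp.takeUntil u hu)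
    have h2 : (pp.takeUntil u hu).length + (pp.dropUntil u hu).length = i - 1 := by
      have := congrArg Walk.length (pp.take_spec hu)
      rwa [Walk.length_append, hlen] at this
    have h3 : (pp.dropUntil u hu).length ≠ 0 := fun h0 =>
      hus (Walk.eq_of_length_eq_zero h0)
    omega
  have hPex : ∃ n, ∃ q : G.Walk w z,
      (∀ u ∈ q.support, u ≠ w → u ≠ z → G.Reachable r u ∧ G.dist r u ≤ i - 2) ∧
      q.length = n := by
    obtain ⟨pw, hpw⟩ := hrw.exists_walk_length_eq_dist
    obtain ⟨pz, hpz⟩ := hrz.exists_walk_length_eq_dist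
    refine ⟨_, pw.reverse.append pz, ?_, rfl⟩
    intro u hu huw huz
    rw [Walk.mem_support_append_iff] at hu
    rcases hu with hu | hu
    · rw [Walk.support_reverse, List.mem_reverse] at hu
      exact key w pw (by rw [hpw, hdw]) u hu huw
    · exact key z pz (by rw [hpz, hdz]) u hu huz
  obtain ⟨q0, hq0, hq0len⟩ := Nat.find_spec hPex
  set p := q0.bypass with hpdef
  have hp : p.IsPath := q0.bypass_isPath
  have hsupp : ∀ u ∈ p.support, u ≠ w → u ≠ z → G.Reachable r u ∧ G.dist r u ≤ i - 2 :=
    fun u hu => hq0 u (q0.support_bypass_subset hu)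
  have hmin : ∀ q' : G.Walk w z,
      (∀ u ∈ q'.support, u ≠ w → u ≠ z → G.Reachable r u ∧ G.dist r u ≤ i - 2) →
      p.length ≤ q'.length := by
    intro q' h'
    calc p.length ≤ q0.length := q0.length_bypass_le
    _ = Nat.find hPex := hq0len
    _ ≤ q'.length := Nat.find_min' hPex ⟨q', h', rfl⟩
  have hxp : x ∉ p.support := by
    intro h
    have := (hsupp x h hxnw hxnz).2
    omega
  have hyp : y ∉ p.support := by
    intro h
    have := (hsupp y h hynw hynz).2
    omega
  have hfar : ∀ v ∈ p.support, v ≠ w → v ≠ z → ∀ t : V, G.dist r t = i → ¬ G.Adj v t := by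
    intro v hv hvw hvz t hdt hadj
    obtain ⟨hreach, hd⟩ := hsupp v hv hvw hvz
    obtain ⟨pv, hpv⟩ := hreach.exists_walk_length_eq_dist
    have hle := SimpleGraph.dist_le (pv.concat hadj)
    rw [Walk.length_concat, hpv] at hle
    omega
  let p1 : G.Walk x z := Walk.cons hxw p
  have hp1 : p1.IsPath := hp.cons hxp
  let q2 : G.Walk y x := Walk.cons hyz p1.reverse
  have hq2 : q2.IsPath := by
    refine hp1.reverse.cons ?_
    rw [Walk.support_reverse, List.mem_reverse]
    simp only [p1, Walk.support_cons, List.mem_cons]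
    push_neg
    exact ⟨fun h => hxny h.symm, hyp⟩
  let c : G.Walk x x := Walk.cons hxy q2
  have hcyc : c.IsCycle := by
    rw [Walk.cons_isCycle_iff]
    refine ⟨hq2, ?_⟩
    intro hmem
    simp only [q2, p1, Walk.edges_cons, Walk.edges_reverse, List.mem_cons,
      List.mem_reverse] at hmem
    rcases hmem with h | h | h
    · rw [Sym2.eq_iff] at h
      rcases h with ⟨h1, _⟩ | ⟨h1, _⟩
      · exact hxny h1
      · exact hxnz h1
    · rw [Sym2.eq_iff] at h
      rcases h with ⟨_, h2⟩ | ⟨h1, _⟩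
      · exact hynw h2
      · exact hxnw h1
    · exact hxp (Walk.fst_mem_support_of_mem_edges p h)
  have hplen : 1 ≤ p.length := by
    rcases Nat.eq_zero_or_pos p.length with h | h
    · exact absurd (Walk.eq_of_length_eq_zero h) hwz
    · exact h
  have hclen : 4 ≤ c.length := by
    simp only [c, q2, p1, Walk.length_cons, Walk.length_reverse]
    omega
  obtain ⟨a, b, ha, hb, hab, hnab⟩ := hch c hcyc hclen
  have hmemc : ∀ v, v ∈ c.support → v = x ∨ v = y ∨ v ∈ p.support := by
    intro v hv
    simp only [c, q2, p1, Walk.support_cons, Walk.support_reverse, List.mem_cons,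
      List.mem_reverse] at hv
    tauto
  have hedgec : ∀ e, (e = s(x, y) ∨ e = s(y, z) ∨ e = s(x, w) ∨ e ∈ p.edges) → e ∈ c.edges := by
    intro e he
    simp only [c, q2, p1, Walk.edges_cons, Walk.edges_reverse, List.mem_cons,
      List.mem_reverse]
    tauto
  have hS : ∀ v ∈ p.support, v ≠ w → v ≠ z → ¬ G.Adj v x ∧ ¬ G.Adj v y := fun v hv h1 h2 =>
    ⟨hfar v hv h1 h2 x hdx, hfar v hv h1 h2 y hdy⟩
  rcases hmemc a ha with rfl | rfl | haS
  · rcases hmemc b hb with rfl | rfl | hbS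
    · exact hab.ne rfl
    · exact hnab (hedgec _ (Or.inl rfl))
    · by_cases hbw : b = w
      · subst hbw; exact hnab (hedgec _ (Or.inr (Or.inr (Or.inl rfl))))
      by_cases hbz : b = z
      · subst hbz; exact hxz hab
      · exact (hS b hbS hbw hbz).1 hab.symm
  · rcases hmemc b hb with rfl | rfl | hbS
    · exact hnab (hedgec _ (Or.inl Sym2.eq_swap))
    · exact hab.ne rfl
    · by_cases hbz : b = z
      · subst hbz; exact hnab (hedgec _ (Or.inr (Or.inl rfl)))
      by_cases hbw : b = w
      · subst hbw; exact hyw hab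
      · exact (hS b hbS hbw hbz).2 hab.symm
  · rcases hmemc b hb with rfl | rfl | hbS
    · by_cases haw : a = w
      · subst haw; exact hnab (hedgec _ (Or.inr (Or.inr (Or.inl Sym2.eq_swap))))
      by_cases haz : a = z
      · subst haz; exact hxz hab.symm
      · exact (hS a haS haw haz).1 hab
    · by_cases haz : a = z
      · subst haz; exact hnab (hedgec _ (Or.inr (Or.inl Sym2.eq_swap)))
      by_cases haw : a = w
      · subst haw; exact hyw hab.symm
      · exact (hS a haS haw haz).2 hab
    · -- a, b both internal to p : shortcut contradicts minimality
      have hnp : s(a, b) ∉ p.edges := fun h =>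
        hnab (hedgec _ (Or.inr (Or.inr (Or.inr h))))
      have hne : a ≠ b := hab.ne
      have hsplit := p.take_spec haS
      have hlen2 : (p.takeUntil a haS).length + (p.dropUntil a haS).length = p.length := by
        have := congrArg Walk.length hsplit
        rwa [Walk.length_append] at this
      have hbtd : b ∈ (p.takeUntil a haS).support ∨ b ∈ (p.dropUntil a haS).support := by
        rw [← Walk.mem_support_append_iff, hsplit]; exact hbS
      rcases hbtd with hbt | hbd
      · set t := p.takeUntil a haS with htdef
        have htl : (t.takeUntil b hbt).length + (t.dropUntil b hbt).length = t.length := by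
          have := congrArg Walk.length (t.take_spec hbt)
          rwa [Walk.length_append] at this
        have hte2 : 2 ≤ (t.dropUntil b hbt).length := by
          have h0 : (t.dropUntil b hbt).length ≠ 0 := fun h0 =>
            hne (Walk.eq_of_length_eq_zero h0).symm
          have h1 : (t.dropUntil b hbt).length ≠ 1 := by
            intro h1
            have hm := edge_mem_of_length_eq_one _ h1
            refine hnp ?_
            rw [Sym2.eq_swap]
            exact p.edges_takeUntil_subset haS (t.edges_dropUntil_subset hbt hm)
          omega
        have hq's : ∀ u ∈ ((t.takeUntil b hbt).append
            (Walk.cons hab.symm (p.dropUntil a haS))).support,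
            u ≠ w → u ≠ z → G.Reachable r u ∧ G.dist r u ≤ i - 2 := by
          intro u hu
          apply hsupp
          rw [Walk.mem_support_append_iff] at hu
          rcases hu with hu | hu
          · exact p.support_takeUntil_subset haS (t.support_takeUntil_subset hbt hu)
          · rw [Walk.support_cons, List.mem_cons] at hu
            rcases hu with heq | hu
            · exact heq ▸ hbS
            · exact p.support_dropUntil_subset haS hu
        have hle := hmin _ hq's
        rw [Walk.length_append, Walk.length_cons] at hle
        omega
      · set d := p.dropUntil a haS with hddef
        have hdl : (d.takeUntil b hbd).length + (d.dropUntil b hbd).length = d.length := by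
          have := congrArg Walk.length (d.take_spec hbd)
          rwa [Walk.length_append] at this
        have hdb2 : 2 ≤ (d.takeUntil b hbd).length := by
          have h0 : (d.takeUntil b hbd).length ≠ 0 := fun h0 =>
            hne (Walk.eq_of_length_eq_zero h0)
          have h1 : (d.takeUntil b hbd).length ≠ 1 := by
            intro h1
            have hm := edge_mem_of_length_eq_one _ h1
            exact hnp (p.edges_dropUntil_subset haS (d.edges_takeUntil_subset hbd hm))
          omega
        have hq's : ∀ u ∈ ((p.takeUntil a haS).append
            (Walk.cons hab (d.dropUntil b hbd))).support,
            u ≠ w → u ≠ z → G.Reachable r u ∧ G.dist r u ≤ i - 2 := by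
          intro u hu
          apply hsupp
          rw [Walk.mem_support_append_iff] at hu
          rcases hu with hu | hu
          · exact p.support_takeUntil_subset haS hu
          · rw [Walk.support_cons, List.mem_cons] at hu
            rcases hu with heq | hu
            · exact heq ▸ haS
            · exact p.support_dropUntil_subset haS (d.support_dropUntil_subset hbd hu)
        have hle := hmin _ hq's
        rw [Walk.length_append, Walk.length_cons] at hle
        omega
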